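/- arXiv:2302.00037 — 3 statements merged into one kernel-verified Lean document; each statement's English description precedes it below -/
import Mathlib

section
/- Let (B,P,f) be a ground-truth tree on blocks B = {B₁,…,B_k}, let 0 ≤ α < 1, and let sim be a symmetric function on pairs of distinct blocks satisfying (1−α)·f(LCA_P(B_i,B_j)) ≤ sim(B_i,B_j) ≤ (1+α)·f(LCA_P(B_i,B_j)) for all i ≠ j. Consider the greedy max-linkage procedure: maintain a collection 𝒞 of groups of blocks, initially the singletons {B₁},…,{B_k}, with group similarity Sim(S,S') = max over B ∈ S, B' ∈ S' of sim(B,B'); repeatedly merge the two groups in 𝒞 of maximum group similarity into a new group, recording at the created internal node the value f'(node) = Sim of the merged pair, until one group remains; let T be the resulting binary tree over the blocks. Then for all i ≠ j: (1−α)·f(LCA_P(B_i,B_j)) ≤ f'(LCA_T(B_i,B_j)) ≤ (1+α)·f(LCA_P(B_i,B_j)). -/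
inductive BTree (V : Type) : Type
  | leaf : V → BTree V
  | node : BTree V → BTree V → BTree V
  deriving DecidableEq

namespace BTree

variable {V : Type} [DecidableEq V]

def leavesList : BTree V → List V
  | leaf x => [x]
  | node L R => L.leavesList ++ R.leavesList

def leaves (T : BTree V) : Finset V :=
  T.leavesList.toFinset

theorem leaves_nonempty (T : BTree V) : T.leaves.Nonempty := by
  induction T with
  | leaf x => exact ⟨x, by simp [leaves, leavesList]⟩
  | node L R ihL ihR =>
    obtain ⟨x, hx⟩ := ihL
    refine ⟨x, ?_⟩
    simp only [leaves, leavesList, List.toFinset_append, Finset.mem_union]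
    exact Or.inl hx

/-- The least common ancestor of two leaves `i, j`: the smallest subtree containing both. -/
def lca : BTree V → V → V → BTree V
  | leaf x, _, _ => leaf x
  | node L R, i, j =>
    if i ∈ L.leaves ∧ j ∈ L.leaves then L.lca i j
    else if i ∈ R.leaves ∧ j ∈ R.leaves then R.lca i j
    else node L R

/-- `Subtree S T` : `S` is a subtree of `T` (rooted at some node of `T`). -/
inductive Subtree : BTree V → BTree V → Prop
  | refl (T : BTree V) : Subtree T T
  | left {S L R : BTree V} : Subtree S L → Subtree S (node L R)
  | right {S L R : BTree V} : Subtree S R → Subtree S (node L R)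

end BTree

section
variable {ι : Type} [DecidableEq ι]

/-- The group similarity of two groups of blocks: the maximum of `sim` over pairs of blocks,
one from each group. -/
noncomputable def groupSim (sim : ι → ι → ℝ) (T₁ T₂ : BTree ι) : ℝ :=
  (T₁.leaves ×ˢ T₂.leaves).sup'
    ((T₁.leaves_nonempty).product (T₂.leaves_nonempty)) fun q => sim q.1 q.2

/-- One step of the greedy max-linkage procedure: merge two (distinct) groups of the current
collection that have maximum group similarity. -/
inductive GreedyStep (sim : ι → ι → ℝ) : Finset (BTree ι) → Finset (BTree ι) → Prop
  | step (C : Finset (BTree ι)) (T₁ T₂ : BTree ι) (h₁ : T₁ ∈ C) (h₂ : T₂ ∈ C) (hne : T₁ ≠ T₂)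
      (hmax : ∀ S₁ ∈ C, ∀ S₂ ∈ C, S₁ ≠ S₂ → groupSim sim S₁ S₂ ≤ groupSim sim T₁ T₂) :
      GreedyStep sim C (insert (BTree.node T₁ T₂) ((C.erase T₁).erase T₂))

/-- The value `f'` recorded at each internal node created by the procedure: the group
similarity of the two merged groups (its two children). -/
noncomputable def recordedVal (sim : ι → ι → ℝ) : BTree ι → ℝ
  | .leaf _ => 0
  | .node L R => groupSim sim L R

end

namespace BTree

variable {V : Type} [DecidableEq V]

theorem leaves_leaf (x : V) : (leaf x : BTree V).leaves = {x} := by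
  simp [leaves, leavesList]

theorem leaves_node (L R : BTree V) : (node L R).leaves = L.leaves ∪ R.leaves := by
  simp [leaves, leavesList]

theorem subtree_leaves_subset {S T : BTree V} (h : Subtree S T) : S.leaves ⊆ T.leaves := by
  induction h with
  | refl => exact subset_rfl
  | left h ih => rw [leaves_node]; exact ih.trans Finset.subset_union_left
  | right h ih => rw [leaves_node]; exact ih.trans Finset.subset_union_right

theorem nodup_node_left {L R : BTree V} (h : (node L R).leavesList.Nodup) :
    L.leavesList.Nodup := by
  simp only [leavesList, List.nodup_append] at h; exact h.1

theorem nodup_node_right {L R : BTree V} (h : (node L R).leavesList.Nodup) :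
    R.leavesList.Nodup := by
  simp only [leavesList, List.nodup_append] at h; exact h.2.1

theorem disjoint_of_nodup {L R : BTree V} (h : (node L R).leavesList.Nodup) :
    Disjoint L.leaves R.leaves := by
  simp only [leavesList, List.nodup_append] at h
  rw [Finset.disjoint_left]
  intro a ha hb
  exact h.2.2 a (List.mem_toFinset.mp ha) a (List.mem_toFinset.mp hb) rfl

theorem nodup_of_disjoint {L R : BTree V} (hL : L.leavesList.Nodup) (hR : R.leavesList.Nodup)
    (hd : Disjoint L.leaves R.leaves) : (node L R).leavesList.Nodup := by
  simp only [leavesList, List.nodup_append]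
  exact ⟨hL, hR, fun a ha b hb hab =>
    Finset.disjoint_left.mp hd (List.mem_toFinset.mpr ha) (List.mem_toFinset.mpr (by subst hab; exact hb))⟩

theorem subtree_nodup {S T : BTree V} (h : Subtree S T) (hnd : T.leavesList.Nodup) :
    S.leavesList.Nodup := by
  induction h with
  | refl => exact hnd
  | left h ih => exact ih (nodup_node_left hnd)
  | right h ih => exact ih (nodup_node_right hnd)

theorem subtree_of_leaf {S : BTree V} {x : V} (h : Subtree S (leaf x)) : S = leaf x := by
  cases h; rfl

theorem subtree_comparable (T : BTree V) : T.leavesList.Nodup → ∀ {S₁ S₂ : BTree V} {x : V},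
    Subtree S₁ T → Subtree S₂ T → x ∈ S₁.leaves → x ∈ S₂.leaves →
    Subtree S₁ S₂ ∨ Subtree S₂ S₁ := by
  induction T with
  | leaf y =>
    intro _ S₁ S₂ x h₁ h₂ _ _
    rw [subtree_of_leaf h₁, subtree_of_leaf h₂]
    exact Or.inl (Subtree.refl _)
  | node L R ihL ihR =>
    intro hnd S₁ S₂ x h₁ h₂ hx₁ hx₂
    have hd := disjoint_of_nodup hnd
    cases h₁ with
    | refl => exact Or.inr h₂
    | @left _ _ h₁' =>
      cases h₂ with
      | refl => exact Or.inl (Subtree.left h₁')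
      | @left _ _ h₂' => exact ihL (nodup_node_left hnd) h₁' h₂' hx₁ hx₂
      | @right _ _ h₂' =>
        exact absurd (subtree_leaves_subset h₂' hx₂)
          (Finset.disjoint_left.mp hd (subtree_leaves_subset h₁' hx₁))
    | @right _ _ h₁' =>
      cases h₂ with
      | refl => exact Or.inl (Subtree.right h₁')
      | @left _ _ h₂' =>
        exact absurd (subtree_leaves_subset h₁' hx₁)
          (Finset.disjoint_left.mp hd (subtree_leaves_subset h₂' hx₂))
      | @right _ _ h₂' => exact ihR (nodup_node_right hnd) h₁' h₂' hx₁ hx₂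

theorem lca_subtree (T : BTree V) (i j : V) : Subtree (T.lca i j) T := by
  induction T with
  | leaf x => exact Subtree.refl _
  | node L R ihL ihR =>
    simp only [lca]
    split_ifs
    · exact Subtree.left ihL
    · exact Subtree.right ihR
    · exact Subtree.refl _

theorem lca_mem (T : BTree V) (i j : V) : i ∈ T.leaves → j ∈ T.leaves →
    i ∈ (T.lca i j).leaves ∧ j ∈ (T.lca i j).leaves := by
  induction T with
  | leaf x => intro hi hj; exact ⟨hi, hj⟩
  | node L R ihL ihR =>
    intro hi hj
    simp only [lca]
    split_ifs with h1 h2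
    · exact ihL h1.1 h1.2
    · exact ihR h2.1 h2.2
    · exact ⟨hi, hj⟩

theorem lca_comm (T : BTree V) (i j : V) : T.lca i j = T.lca j i := by
  induction T with
  | leaf x => rfl
  | node L R ihL ihR =>
    by_cases hiL : i ∈ L.leaves <;> by_cases hjL : j ∈ L.leaves <;>
      by_cases hiR : i ∈ R.leaves <;> by_cases hjR : j ∈ R.leaves <;>
      simp [lca, hiL, hjL, hiR, hjR, ihL, ihR]

theorem lca_eq_of_subtree {S T : BTree V} (h : Subtree S T) : T.leavesList.Nodup →
    ∀ {i j : V}, i ∈ S.leaves → j ∈ S.leaves → T.lca i j = S.lca i j := by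
  induction h with
  | refl => intro _ i j _ _; rfl
  | @left L R h ih =>
    intro hnd i j hi hj
    have hsub := subtree_leaves_subset h
    simp only [lca]
    rw [if_pos ⟨hsub hi, hsub hj⟩]
    exact ih (nodup_node_left hnd) hi hj
  | @right L R h ih =>
    intro hnd i j hi hj
    have hsub := subtree_leaves_subset h
    have hd := disjoint_of_nodup hnd
    simp only [lca]
    rw [if_neg (fun hc => Finset.disjoint_left.mp hd hc.1 (hsub hi)),
      if_pos ⟨hsub hi, hsub hj⟩]
    exact ih (nodup_node_right hnd) hi hj

theorem lca_split (T : BTree V) : T.leavesList.Nodup → ∀ {i j : V},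
    i ∈ T.leaves → j ∈ T.leaves → i ≠ j →
    ∃ L R, T.lca i j = node L R ∧ Disjoint L.leaves R.leaves ∧
      ((i ∈ L.leaves ∧ j ∈ R.leaves) ∨ (i ∈ R.leaves ∧ j ∈ L.leaves)) := by
  induction T with
  | leaf x =>
    intro _ i j hi hj hij
    rw [leaves_leaf, Finset.mem_singleton] at hi hj
    exact absurd (hi.trans hj.symm) hij
  | node L R ihL ihR =>
    intro hnd i j hi hj hij
    have hd := disjoint_of_nodup hnd
    rw [leaves_node, Finset.mem_union] at hi hj
    simp only [lca]
    by_cases h1 : i ∈ L.leaves ∧ j ∈ L.leaves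
    · rw [if_pos h1]; exact ihL (nodup_node_left hnd) h1.1 h1.2 hij
    · rw [if_neg h1]
      by_cases h2 : i ∈ R.leaves ∧ j ∈ R.leaves
      · rw [if_pos h2]; exact ihR (nodup_node_right hnd) h2.1 h2.2 hij
      · rw [if_neg h2]
        refine ⟨L, R, rfl, hd, ?_⟩
        rcases hi with hiL | hiR <;> rcases hj with hjL | hjR
        · exact absurd ⟨hiL, hjL⟩ h1
        · exact Or.inl ⟨hiL, hjR⟩
        · exact Or.inr ⟨hiR, hjL⟩
        · exact absurd ⟨hiR, hjR⟩ h2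

end BTree

section
variable {ι : Type} [DecidableEq ι]

theorem le_groupSim (sim : ι → ι → ℝ) {A B : BTree ι} {i j : ι}
    (hi : i ∈ A.leaves) (hj : j ∈ B.leaves) : sim i j ≤ groupSim sim A B := by
  unfold groupSim
  exact Finset.le_sup' (f := fun q : ι × ι => sim q.1 q.2) (b := (i, j))
    (Finset.mem_product.mpr ⟨hi, hj⟩)

theorem groupSim_le {sim : ι → ι → ℝ} {A B : BTree ι} {c : ℝ}
    (h : ∀ i ∈ A.leaves, ∀ j ∈ B.leaves, sim i j ≤ c) : groupSim sim A B ≤ c := by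
  unfold groupSim
  exact Finset.sup'_le _ _ fun q hq => by
    rw [Finset.mem_product] at hq
    exact h q.1 hq.1 q.2 hq.2

theorem groupSim_comm {sim : ι → ι → ℝ} (hsymm : ∀ i j, sim i j = sim j i)
    (A B : BTree ι) : groupSim sim A B = groupSim sim B A :=
  le_antisymm
    (groupSim_le fun i hi j hj => (hsymm i j) ▸ le_groupSim sim hj hi)
    (groupSim_le fun i hi j hj => (hsymm i j) ▸ le_groupSim sim hj hi)

theorem groupSim_leaf (sim : ι → ι → ℝ) (a b : ι) :
    groupSim sim (BTree.leaf a) (BTree.leaf b) = sim a b :=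
  le_antisymm
    (groupSim_le fun i hi j hj => by
      rw [BTree.leaves_leaf, Finset.mem_singleton] at hi hj
      rw [hi, hj])
    (le_groupSim sim (by simp [BTree.leaves_leaf]) (by simp [BTree.leaves_leaf]))

end
/-- Given a ground-truth tree `(B,P,f)` and a similarity function `sim` with
`(1−α)·f(LCA_P(B_i,B_j)) ≤ sim(B_i,B_j) ≤ (1+α)·f(LCA_P(B_i,B_j))` for all `i ≠ j`
(`0 ≤ α < 1`), any run of the greedy max-linkage procedure starting from the singleton groups
and ending with a single tree `T` (with recorded internal-node values `f'`) satisfies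
`(1−α)·f(LCA_P(B_i,B_j)) ≤ f'(LCA_T(B_i,B_j)) ≤ (1+α)·f(LCA_P(B_i,B_j))` for all `i ≠ j`. -/
theorem greedy_linkage_approx (ι : Type) [Fintype ι] [DecidableEq ι]
    (P : BTree ι) (hnodup : P.leavesList.Nodup) (hleaves : P.leaves = Finset.univ)
    (f : BTree ι → ℝ)
    (hf01 : ∀ S : BTree ι, BTree.Subtree S P → 0 ≤ f S ∧ f S ≤ 1)
    (hanc : ∀ S S' : BTree ι, BTree.Subtree S' S → BTree.Subtree S P → S' ≠ S → f S < f S')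
    (α : ℝ) (hα0 : 0 ≤ α) (hα1 : α < 1)
    (sim : ι → ι → ℝ) (hsymm : ∀ i j, sim i j = sim j i)
    (hsim : ∀ i j : ι, i ≠ j →
      (1 - α) * f (P.lca i j) ≤ sim i j ∧ sim i j ≤ (1 + α) * f (P.lca i j))
    (T : BTree ι)
    (hrun : Relation.ReflTransGen (GreedyStep sim)
      (Finset.univ.image BTree.leaf) {T}) :
    ∀ i j : ι, i ≠ j →
      (1 - α) * f (P.lca i j) ≤ recordedVal sim (T.lca i j) ∧
      recordedVal sim (T.lca i j) ≤ (1 + α) * f (P.lca i j) := by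
  have h1α : (0:ℝ) ≤ 1 + α := by linarith
  have hPmem : ∀ x : ι, x ∈ P.leaves := by rw [hleaves]; exact fun x => Finset.mem_univ x
  -- monotonicity of f along subtrees
  have hmono : ∀ S S' : BTree ι, BTree.Subtree S' S → BTree.Subtree S P → f S ≤ f S' := by
    intro S S' h hP
    by_cases he : S' = S
    · rw [he]
    · exact (hanc S S' h hP he).le
  -- the ultrametric-type comparison lemma in P
  have keyC : ∀ i i' j : ι, i ≠ i' → i ≠ j → i' ≠ j →
      f (P.lca i' j) ≤ f (P.lca i j) ∨ P.lca i i' = P.lca i j := by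
    intro i i' j hii' hij hi'j
    have hA : BTree.Subtree (P.lca i j) P := BTree.lca_subtree P i j
    have hB : BTree.Subtree (P.lca i' j) P := BTree.lca_subtree P i' j
    have hmemA := BTree.lca_mem P i j (hPmem i) (hPmem j)
    have hmemB := BTree.lca_mem P i' j (hPmem i') (hPmem j)
    rcases BTree.subtree_comparable P hnodup hA hB hmemA.2 hmemB.2 with hAB | hBA
    · exact Or.inl (hmono _ _ hAB hB)
    · by_cases heq : P.lca i' j = P.lca i j
      · exact Or.inl (le_of_eq (by rw [heq]))
      · -- B is a proper subtree of A; show P.lca i i' = P.lca i j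
        obtain ⟨L, R, hLR, hd, hsplit⟩ :=
          BTree.lca_split P hnodup (hPmem i) (hPmem j) hij
        right
        have hndA : (P.lca i j).leavesList.Nodup := BTree.subtree_nodup hA hnodup
        rw [hLR] at hBA heq hndA
        have hjB : j ∈ (P.lca i' j).leaves := hmemB.2
        have hi'B : i' ∈ (P.lca i' j).leaves := hmemB.1
        obtain ⟨B, hBdef⟩ : ∃ B, P.lca i' j = B := ⟨_, rfl⟩
        rw [hBdef] at hBA heq hjB hi'B
        have hside : (i ∈ L.leaves ∧ i' ∈ R.leaves) ∨ (i ∈ R.leaves ∧ i' ∈ L.leaves) := by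
          cases hBA with
          | refl => exact absurd rfl heq
          | @left _ _ hB' =>
            have hjL : j ∈ L.leaves := BTree.subtree_leaves_subset hB' hjB
            have hi'L : i' ∈ L.leaves := BTree.subtree_leaves_subset hB' hi'B
            rcases hsplit with ⟨hiL, hjR⟩ | ⟨hiR, hjL'⟩
            · exact absurd hjL (Finset.disjoint_right.mp hd hjR)
            · exact Or.inr ⟨hiR, hi'L⟩
          | @right _ _ hB' =>
            have hjR : j ∈ R.leaves := BTree.subtree_leaves_subset hB' hjB
            have hi'R : i' ∈ R.leaves := BTree.subtree_leaves_subset hB' hi'B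
            rcases hsplit with ⟨hiL, hjR'⟩ | ⟨hiR, hjL⟩
            · exact Or.inl ⟨hiL, hi'R⟩
            · exact absurd hjR (Finset.disjoint_left.mp hd hjL)
        have : P.lca i i' = (BTree.node L R).lca i i' := by
          apply BTree.lca_eq_of_subtree (hLR ▸ hA) hnodup
          · rcases hside with ⟨h, _⟩ | ⟨h, _⟩ <;>
              · rw [BTree.leaves_node]; exact Finset.mem_union.mpr (by first | exact Or.inl h | exact Or.inr h)
          · rcases hside with ⟨_, h⟩ | ⟨_, h⟩ <;>
              · rw [BTree.leaves_node]; exact Finset.mem_union.mpr (by first | exact Or.inl h | exact Or.inr h)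
        rw [hLR, this]
        simp only [BTree.lca]
        rcases hside with ⟨hiL, hi'R⟩ | ⟨hiR, hi'L⟩
        · rw [if_neg (show ¬(i ∈ L.leaves ∧ i' ∈ L.leaves) from
              fun hc => Finset.disjoint_left.mp hd hc.2 hi'R),
            if_neg (show ¬(i ∈ R.leaves ∧ i' ∈ R.leaves) from
              fun hc => Finset.disjoint_left.mp hd hiL hc.1)]
        · rw [if_neg (show ¬(i ∈ L.leaves ∧ i' ∈ L.leaves) from
              fun hc => Finset.disjoint_left.mp hd hc.1 hiR),
            if_neg (show ¬(i ∈ R.leaves ∧ i' ∈ R.leaves) from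
              fun hc => Finset.disjoint_left.mp hd hi'L hc.2)]
  -- the invariant maintained by the greedy procedure
  set Inv : Finset (BTree ι) → Prop := fun C =>
    (∀ S ∈ C, S.leavesList.Nodup) ∧
    (∀ S₁ ∈ C, ∀ S₂ ∈ C, S₁ ≠ S₂ → Disjoint S₁.leaves S₂.leaves) ∧
    (∀ x : ι, ∃ S ∈ C, x ∈ S.leaves) ∧
    (∀ S ∈ C, ∀ i j : ι, i ∈ S.leaves → j ∈ S.leaves → i ≠ j →
      (1 - α) * f (P.lca i j) ≤ recordedVal sim (S.lca i j) ∧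
      recordedVal sim (S.lca i j) ≤ (1 + α) * f (P.lca i j)) ∧
    (∀ S₁ ∈ C, ∀ S₂ ∈ C, S₁ ≠ S₂ → ∀ i ∈ S₁.leaves, ∀ j ∈ S₂.leaves,
      groupSim sim S₁ S₂ ≤ (1 + α) * f (P.lca i j)) with hInvDef
  suffices hInv : Inv {T} by
    obtain ⟨hnd, hdisj, hcov, hA, hB⟩ := hInv
    intro i j hij
    have hi : i ∈ T.leaves := by
      obtain ⟨S, hS, h⟩ := hcov i
      rwa [Finset.mem_singleton.mp hS] at h
    have hj : j ∈ T.leaves := by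
      obtain ⟨S, hS, h⟩ := hcov j
      rwa [Finset.mem_singleton.mp hS] at h
    exact hA T (Finset.mem_singleton_self T) i j hi hj hij
  -- the initial collection satisfies the invariant
  have h0 : Inv (Finset.univ.image BTree.leaf) := by
    rw [hInvDef]
    have hmem : ∀ S ∈ Finset.univ.image (BTree.leaf (V := ι)), ∃ a : ι, S = BTree.leaf a := by
      intro S hS
      obtain ⟨a, _, ha⟩ := Finset.mem_image.mp hS
      exact ⟨a, ha.symm⟩
    refine ⟨?_, ?_, ?_, ?_, ?_⟩
    · intro S hS
      obtain ⟨a, rfl⟩ := hmem S hS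
      simp [BTree.leavesList]
    · intro S₁ hS₁ S₂ hS₂ hne
      obtain ⟨a, rfl⟩ := hmem S₁ hS₁
      obtain ⟨b, rfl⟩ := hmem S₂ hS₂
      have : a ≠ b := fun h => hne (by rw [h])
      rw [BTree.leaves_leaf, BTree.leaves_leaf, Finset.disjoint_singleton]
      exact this
    · intro x
      exact ⟨BTree.leaf x, Finset.mem_image_of_mem _ (Finset.mem_univ x),
        by simp [BTree.leaves_leaf]⟩
    · intro S hS i j hi hj hij
      obtain ⟨a, rfl⟩ := hmem S hS
      rw [BTree.leaves_leaf, Finset.mem_singleton] at hi hj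
      exact absurd (hi.trans hj.symm) hij
    · intro S₁ hS₁ S₂ hS₂ hne i hi j hj
      obtain ⟨a, rfl⟩ := hmem S₁ hS₁
      obtain ⟨b, rfl⟩ := hmem S₂ hS₂
      rw [BTree.leaves_leaf, Finset.mem_singleton] at hi hj
      subst hi; subst hj
      have hab : i ≠ j := fun h => hne (by rw [h])
      rw [groupSim_leaf]
      exact (hsim i j hab).2
  -- the invariant is preserved by each greedy step
  have hpres : ∀ C D : Finset (BTree ι), GreedyStep sim C D → Inv C → Inv D := by
    intro C D hstep hICfull
    rw [hInvDef] at hICfull ⊢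
    obtain ⟨hnd, hdisj, hcov, hA, hB⟩ := hICfull
    cases hstep with
    | step T₁ T₂ h₁ h₂ hne hmax =>
      have hmem : ∀ S, S ∈ insert (BTree.node T₁ T₂) ((C.erase T₁).erase T₂) →
          S = BTree.node T₁ T₂ ∨ (S ∈ C ∧ S ≠ T₁ ∧ S ≠ T₂) := by
        intro S hS
        rcases Finset.mem_insert.mp hS with h | h
        · exact Or.inl h
        · rw [Finset.mem_erase, Finset.mem_erase] at h
          exact Or.inr ⟨h.2.2, h.2.1, h.1⟩
      have hd12 : Disjoint T₁.leaves T₂.leaves := hdisj T₁ h₁ T₂ h₂ hne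
      have hnd12 : (BTree.node T₁ T₂).leavesList.Nodup :=
        BTree.nodup_of_disjoint (hnd T₁ h₁) (hnd T₂ h₂) hd12
      -- the crucial consequence of greediness
      have key : ∀ A B : BTree ι, ((A = T₁ ∧ B = T₂) ∨ (A = T₂ ∧ B = T₁)) →
          ∀ S₃ ∈ C, S₃ ≠ T₁ → S₃ ≠ T₂ → ∀ i ∈ A.leaves, ∀ j ∈ S₃.leaves,
          groupSim sim B S₃ ≤ (1 + α) * f (P.lca i j) := by
        intro A B hAB S₃ hS₃ hn1 hn2 i hi j hj
        have hAC : A ∈ C := by rcases hAB with ⟨rfl, rfl⟩ | ⟨rfl, rfl⟩ <;> assumption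
        have hBC : B ∈ C := by rcases hAB with ⟨rfl, rfl⟩ | ⟨rfl, rfl⟩ <;> assumption
        have hABne : A ≠ B := by
          rcases hAB with ⟨rfl, rfl⟩ | ⟨rfl, rfl⟩
          · exact hne
          · exact hne.symm
        have hAS₃ : A ≠ S₃ := by
          rcases hAB with ⟨rfl, rfl⟩ | ⟨rfl, rfl⟩
          · exact fun h => hn1 h.symm
          · exact fun h => hn2 h.symm
        have hBS₃ : B ≠ S₃ := by
          rcases hAB with ⟨rfl, rfl⟩ | ⟨rfl, rfl⟩
          · exact fun h => hn2 h.symm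
          · exact fun h => hn1 h.symm
        have hmax' : groupSim sim B S₃ ≤ groupSim sim A B := by
          have := hmax B hBC S₃ hS₃ hBS₃
          rcases hAB with ⟨rfl, rfl⟩ | ⟨rfl, rfl⟩
          · exact this
          · rw [groupSim_comm hsymm A B]; exact this
        obtain ⟨i', hi'⟩ := B.leaves_nonempty
        have hii' : i ≠ i' := fun h =>
          Finset.disjoint_left.mp (hdisj A hAC B hBC hABne) hi (h ▸ hi')
        have hij : i ≠ j := fun h =>
          Finset.disjoint_left.mp (hdisj A hAC S₃ hS₃ hAS₃) hi (h ▸ hj)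
        have hi'j : i' ≠ j := fun h =>
          Finset.disjoint_left.mp (hdisj B hBC S₃ hS₃ hBS₃) hi' (h ▸ hj)
        rcases keyC i i' j hii' hij hi'j with hle | heq
        · calc groupSim sim B S₃ ≤ (1 + α) * f (P.lca i' j) :=
                hB B hBC S₃ hS₃ hBS₃ i' hi' j hj
            _ ≤ (1 + α) * f (P.lca i j) := mul_le_mul_of_nonneg_left hle h1α
        · calc groupSim sim B S₃ ≤ groupSim sim A B := hmax'
            _ ≤ (1 + α) * f (P.lca i i') := hB A hAC B hBC hABne i hi i' hi'
            _ = (1 + α) * f (P.lca i j) := by rw [heq]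
      have keyNode : ∀ S₃ ∈ C, S₃ ≠ T₁ → S₃ ≠ T₂ →
          ∀ i ∈ (BTree.node T₁ T₂).leaves, ∀ j ∈ S₃.leaves,
          groupSim sim (BTree.node T₁ T₂) S₃ ≤ (1 + α) * f (P.lca i j) := by
        intro S₃ hS₃ hn1 hn2 i hi j hj
        rw [BTree.leaves_node, Finset.mem_union] at hi
        have hb1 : groupSim sim T₁ S₃ ≤ (1 + α) * f (P.lca i j) := by
          rcases hi with hi | hi
          · exact hB T₁ h₁ S₃ hS₃ (fun h => hn1 h.symm) i hi j hj
          · exact key T₂ T₁ (Or.inr ⟨rfl, rfl⟩) S₃ hS₃ hn1 hn2 i hi j hj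
        have hb2 : groupSim sim T₂ S₃ ≤ (1 + α) * f (P.lca i j) := by
          rcases hi with hi | hi
          · exact key T₁ T₂ (Or.inl ⟨rfl, rfl⟩) S₃ hS₃ hn1 hn2 i hi j hj
          · exact hB T₂ h₂ S₃ hS₃ (fun h => hn2 h.symm) i hi j hj
        refine groupSim_le ?_
        intro a ha b hb
        rw [BTree.leaves_node, Finset.mem_union] at ha
        rcases ha with ha | ha
        · exact (le_groupSim sim ha hb).trans hb1
        · exact (le_groupSim sim ha hb).trans hb2
      refine ⟨?_, ?_, ?_, ?_, ?_⟩
      -- nodup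
      · intro S hS
        rcases hmem S hS with rfl | ⟨hSC, _, _⟩
        · exact hnd12
        · exact hnd S hSC
      -- pairwise disjoint
      · intro S₁ hS₁ S₂ hS₂ hne'
        rcases hmem S₁ hS₁ with rfl | ⟨hC1, hn11, hn12⟩ <;>
          rcases hmem S₂ hS₂ with h2 | ⟨hC2, hn21, hn22⟩
        · exact absurd h2.symm hne'
        · rw [BTree.leaves_node, Finset.disjoint_union_left]
          exact ⟨hdisj T₁ h₁ S₂ hC2 (fun h => hn21 h.symm),
            hdisj T₂ h₂ S₂ hC2 (fun h => hn22 h.symm)⟩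
        · subst h2
          rw [BTree.leaves_node, Finset.disjoint_union_right]
          exact ⟨hdisj S₁ hC1 T₁ h₁ hn11, hdisj S₁ hC1 T₂ h₂ hn12⟩
        · exact hdisj S₁ hC1 S₂ hC2 hne'
      -- coverage
      · intro x
        obtain ⟨S, hS, hx⟩ := hcov x
        by_cases h : S = T₁ ∨ S = T₂
        · refine ⟨BTree.node T₁ T₂, Finset.mem_insert_self _ _, ?_⟩
          rw [BTree.leaves_node, Finset.mem_union]
          rcases h with rfl | rfl
          · exact Or.inl hx
          · exact Or.inr hx
        · push_neg at h
          refine ⟨S, ?_, hx⟩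
          rw [Finset.mem_insert, Finset.mem_erase, Finset.mem_erase]
          exact Or.inr ⟨h.2, h.1, hS⟩
      -- within-group bounds
      · intro S hS i j hi hj hij
        rcases hmem S hS with rfl | ⟨hSC, _, _⟩
        · rw [BTree.leaves_node, Finset.mem_union] at hi hj
          rcases hi with hi | hi <;> rcases hj with hj | hj
          · -- both in T₁
            have : (BTree.node T₁ T₂).lca i j = T₁.lca i j := by
              simp only [BTree.lca]; rw [if_pos ⟨hi, hj⟩]
            rw [this]
            exact hA T₁ h₁ i j hi hj hij
          · -- i ∈ T₁, j ∈ T₂ : the lca is the new node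
            have hlca : (BTree.node T₁ T₂).lca i j = BTree.node T₁ T₂ := by
              simp only [BTree.lca]
              rw [if_neg (show ¬(i ∈ T₁.leaves ∧ j ∈ T₁.leaves) from
                  fun hc => Finset.disjoint_right.mp hd12 hj hc.2),
                if_neg (show ¬(i ∈ T₂.leaves ∧ j ∈ T₂.leaves) from
                  fun hc => Finset.disjoint_left.mp hd12 hi hc.1)]
            rw [hlca]
            have hrv : recordedVal sim (BTree.node T₁ T₂) = groupSim sim T₁ T₂ := rfl
            rw [hrv]
            constructor
            · exact le_trans (hsim i j hij).1 (le_groupSim sim hi hj)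
            · exact hB T₁ h₁ T₂ h₂ hne i hi j hj
          · -- i ∈ T₂, j ∈ T₁
            have hlca : (BTree.node T₁ T₂).lca i j = BTree.node T₁ T₂ := by
              simp only [BTree.lca]
              rw [if_neg (show ¬(i ∈ T₁.leaves ∧ j ∈ T₁.leaves) from
                  fun hc => Finset.disjoint_right.mp hd12 hi hc.1),
                if_neg (show ¬(i ∈ T₂.leaves ∧ j ∈ T₂.leaves) from
                  fun hc => Finset.disjoint_left.mp hd12 hj hc.2)]
            rw [hlca]
            have hrv : recordedVal sim (BTree.node T₁ T₂) = groupSim sim T₁ T₂ := rfl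
            rw [hrv]
            constructor
            · have := le_trans (hsim j i hij.symm).1 (le_groupSim sim hj hi)
              rwa [BTree.lca_comm P j i] at this
            · have := hB T₁ h₁ T₂ h₂ hne j hj i hi
              rwa [BTree.lca_comm P j i] at this
          · -- both in T₂
            have : (BTree.node T₁ T₂).lca i j = T₂.lca i j := by
              simp only [BTree.lca]
              rw [if_neg (show ¬(i ∈ T₁.leaves ∧ j ∈ T₁.leaves) from
                  fun hc => Finset.disjoint_left.mp hd12 hc.1 hi),
                if_pos ⟨hi, hj⟩]
            rw [this]
            exact hA T₂ h₂ i j hi hj hij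
        · exact hA S hSC i j hi hj hij
      -- cross-group bound
      · intro S₁ hS₁ S₂ hS₂ hne' i hi j hj
        rcases hmem S₁ hS₁ with rfl | ⟨hC1, hn11, hn12⟩ <;>
          rcases hmem S₂ hS₂ with h2 | ⟨hC2, hn21, hn22⟩
        · exact absurd h2.symm hne'
        · exact keyNode S₂ hC2 hn21 hn22 i hi j hj
        · subst h2
          rw [groupSim_comm hsymm, BTree.lca_comm P i j]
          exact keyNode S₁ hC1 hn11 hn12 j hj i hi
        · exact hB S₁ hC1 S₂ hC2 hne' i hi j hj
  -- run the induction along the greedy procedure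
  have hgen : ∀ D : Finset (BTree ι),
      Relation.ReflTransGen (GreedyStep sim) (Finset.univ.image BTree.leaf) D → Inv D := by
    intro D h
    induction h with
    | refl => exact h0
    | @tail b c hab hstep ih => exact hpres b c hstep ih
  exact hgen {T} hrun
end

section
/- Let n ≥ 2, 0 < δ < 1, and let m be an integer with m ≥ 64·ln(2n/δ). Let M and M' be real d×c matrices with c ≤ n/4 columns, and let P be a random m×d matrix whose entries are i.i.d. Gaussian with mean 0 and variance 1/m. Then with probability at least 1 − δ/4 over the choice of P, ‖P·M − P·M'‖_F ≤ (3/2)·‖M − M'‖_F, where ‖·‖_F denotes the Frobenius norm. -/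
open MeasureTheory ProbabilityTheory
open Real NNReal ENNReal

section Grouping
variable {ι Ω : Type*} [DecidableEq ι] [mΩ : MeasurableSpace Ω] {μ : Measure Ω}

/-- Extend a function on a finset's coercion to the whole type by 0. -/
noncomputable def extFin (s : Finset ι) (u : {x // x ∈ s} → ℝ) : ι → ℝ :=
  fun i => if h : i ∈ s then u ⟨i, h⟩ else 0

lemma measurable_extFin (s : Finset ι) : Measurable (extFin s) := by
  apply measurable_pi_lambda
  intro i
  by_cases h : i ∈ s
  · simp only [extFin, dif_pos h]
    exact measurable_pi_apply _
  · simp only [extFin, dif_neg h]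
    exact measurable_const

lemma lintegral_prod_groups [IsProbabilityMeasure μ] {f : ι → Ω → ℝ}
    (hindep : iIndepFun f μ)
    (hf : ∀ i, Measurable (f i)) {κ : Type*} [DecidableEq κ] (S : κ → Finset ι)
    (hS : ∀ a b, a ≠ b → Disjoint (S a) (S b))
    (F : κ → (ι → ℝ) → ℝ≥0∞) (hFm : ∀ a, Measurable (F a))
    (hFd : ∀ a (v w : ι → ℝ), (∀ i ∈ S a, v i = w i) → F a v = F a w)
    (t : Finset κ) :
    ∫⁻ ω, ∏ a ∈ t, F a (fun i => f i ω) ∂μ = ∏ a ∈ t, ∫⁻ ω, F a (fun i => f i ω) ∂μ := by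
  classical
  induction t using Finset.induction_on with
  | empty => simp
  | @insert a t ha ih =>
    simp only [Finset.prod_insert ha]
    rw [← ih]
    have hAB : Disjoint (S a) (t.biUnion S) := by
      rw [Finset.disjoint_biUnion_right]
      intro b hb
      exact hS a b (fun h => ha (h ▸ hb))
    have h1 := hindep.indepFun_finset (S a) (t.biUnion S) hAB hf
    set φ : ({x // x ∈ S a} → ℝ) → ℝ≥0∞ := fun u => F a (extFin (S a) u) with hφ
    set ψ : ({x // x ∈ t.biUnion S} → ℝ) → ℝ≥0∞ :=
      fun u => ∏ b ∈ t, F b (extFin (t.biUnion S) u) with hψ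
    have hφm : Measurable φ := (hFm a).comp (measurable_extFin _)
    have hψm : Measurable ψ :=
      Finset.measurable_prod _ (fun b _ => (hFm b).comp (measurable_extFin _))
    have h2 := h1.comp hφm hψm
    have e1 : (φ ∘ fun ω (i : {x // x ∈ S a}) => f i ω)
        = fun ω => F a (fun i => f i ω) := by
      funext ω
      exact hFd a _ _ (fun i hi => by simp [extFin, hi])
    have e2 : (ψ ∘ fun ω (i : {x // x ∈ t.biUnion S}) => f i ω)
        = fun ω => ∏ b ∈ t, F b (fun i => f i ω) := by
      funext ω
      refine Finset.prod_congr rfl (fun b hb => ?_)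
      refine hFd b _ _ (fun i hi => ?_)
      have : i ∈ t.biUnion S := Finset.mem_biUnion.mpr ⟨b, hb, hi⟩
      simp [extFin, this]
    rw [e1, e2] at h2
    have := lintegral_mul_eq_lintegral_mul_lintegral_of_indepFun
      (f := fun ω => F a (fun i => f i ω)) (g := fun ω => ∏ b ∈ t, F b (fun i => f i ω))
      ((hFm a).comp (measurable_pi_lambda _ hf))
      (Finset.measurable_prod _ (fun b _ => (hFm b).comp (measurable_pi_lambda _ hf))) h2
    simpa using this
end Grouping

lemma integral_exp_quad (p q : ℝ) (hp : 0 < p) :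
    ∫ y : ℝ, Real.exp (-p * y ^ 2 + q * y) = Real.sqrt (π / p) * Real.exp (q ^ 2 / (4 * p)) := by
  have key : ∀ y : ℝ, Real.exp (-p * y ^ 2 + q * y)
      = Real.exp (q ^ 2 / (4 * p)) * Real.exp (-p * (y - q / (2 * p)) ^ 2) := by
    intro y
    rw [← Real.exp_add]
    congr 1
    field_simp
    ring
  simp_rw [key]
  rw [integral_const_mul]
  rw [integral_sub_right_eq_self (μ := volume) (fun y => Real.exp (-p * y ^ 2)) (q / (2 * p)),
    integral_gaussian]
  ring

lemma integrable_exp_quad (p q : ℝ) (hp : 0 < p) :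
    Integrable (fun y : ℝ => Real.exp (-p * y ^ 2 + q * y)) := by
  have key : ∀ y : ℝ, Real.exp (-p * y ^ 2 + q * y)
      = Real.exp (q ^ 2 / (4 * p)) * Real.exp (-p * (y - q / (2 * p)) ^ 2) := by
    intro y
    rw [← Real.exp_add]
    congr 1
    field_simp
    ring
  simp_rw [key]
  exact ((integrable_exp_neg_mul_sq hp).comp_sub_right (q / (2 * p))).const_mul _

lemma lintegral_gauss_aux (v : ℝ≥0) (hv : v ≠ 0) (f : ℝ → ℝ) (hf : Measurable f)
    (hnn : ∀ y, 0 ≤ f y) (hi : Integrable (fun y => gaussianPDFReal 0 v y * f y)) :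
    ∫⁻ y, ENNReal.ofReal (f y) ∂(gaussianReal 0 v)
      = ENNReal.ofReal (∫ y, gaussianPDFReal 0 v y * f y) := by
  rw [gaussianReal_of_var_ne_zero 0 hv,
    lintegral_withDensity_eq_lintegral_mul _ (measurable_gaussianPDF 0 v) hf.ennreal_ofReal,
    ofReal_integral_eq_lintegral_ofReal hi (Filter.Eventually.of_forall fun y =>
      mul_nonneg (gaussianPDFReal_nonneg 0 v y) (hnn y))]
  congr 1 with y
  simp [gaussianPDF, ENNReal.ofReal_mul]
  rw [← ENNReal.ofReal_mul (gaussianPDFReal_nonneg 0 v y)]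


lemma lintegral_exp_mul_gauss (v : ℝ≥0) (g : ℝ) :
    ∫⁻ y, ENNReal.ofReal (Real.exp (g * y)) ∂(gaussianReal 0 v)
      = ENNReal.ofReal (Real.exp ((v : ℝ) * g ^ 2 / 2)) := by
  rcases eq_or_ne v 0 with rfl | hv
  · simp [gaussianReal_zero_var, lintegral_dirac]
  have hvpos : (0 : ℝ) < (v : ℝ) := lt_of_le_of_ne v.coe_nonneg (by exact_mod_cast (Ne.symm hv))
  have hp : (0:ℝ) < 1/(2*(v:ℝ)) := by positivity
  have hkey : ∀ y, gaussianPDFReal 0 v y * Real.exp (g * y)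
      = (Real.sqrt (2 * π * (v:ℝ)))⁻¹ * Real.exp (-(1/(2*(v:ℝ))) * y ^ 2 + g * y) := by
    intro y
    unfold gaussianPDFReal
    rw [mul_assoc, ← Real.exp_add]
    congr 2
    field_simp
    try ring
  rw [lintegral_gauss_aux v hv _ (by fun_prop) (fun y => (Real.exp_pos _).le) ?_]
  · congr 1
    simp_rw [hkey]
    rw [integral_const_mul, integral_exp_quad _ g hp]
    rw [show π / (1/(2*(v:ℝ))) = 2*π*(v:ℝ) by field_simp]
    rw [← mul_assoc, inv_mul_cancel₀ (by positivity), one_mul]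
    congr 1
    field_simp
    ring
  · simp_rw [hkey]
    exact (integrable_exp_quad _ g hp).const_mul _

lemma lintegral_exp_sq_gauss (v : ℝ≥0) (s : ℝ) (hs : 2 * s * (v : ℝ) < 1) (hv : v ≠ 0) :
    ∫⁻ y, ENNReal.ofReal (Real.exp (s * y ^ 2)) ∂(gaussianReal 0 v)
      = ENNReal.ofReal ((Real.sqrt (1 - 2 * s * (v : ℝ)))⁻¹) := by
  have hvpos : (0 : ℝ) < (v : ℝ) := lt_of_le_of_ne v.coe_nonneg (by exact_mod_cast (Ne.symm hv))
  have hone : (0:ℝ) < 1 - 2 * s * (v:ℝ) := by linarith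
  have hp : (0:ℝ) < 1/(2*(v:ℝ)) - s := by
    have : s < 1/(2*(v:ℝ)) := by
      rw [lt_div_iff₀ (by positivity)]
      nlinarith
    linarith
  have hkey : ∀ y, gaussianPDFReal 0 v y * Real.exp (s * y ^ 2)
      = (Real.sqrt (2 * π * (v:ℝ)))⁻¹ * Real.exp (-(1/(2*(v:ℝ)) - s) * y ^ 2 + 0 * y) := by
    intro y
    unfold gaussianPDFReal
    rw [mul_assoc, ← Real.exp_add]
    congr 2
    field_simp
    try ring
  rw [lintegral_gauss_aux v hv _ (by fun_prop) (fun y => (Real.exp_pos _).le) ?_]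
  · congr 1
    simp_rw [hkey]
    rw [integral_const_mul, integral_exp_quad _ 0 hp]
    have h1 : π / (1/(2*(v:ℝ)) - s) = 2*π*(v:ℝ) / (1 - 2 * s * (v:ℝ)) := by
      rw [div_eq_div_iff (by positivity) hone.ne']
      field_simp
    rw [h1]
    simp only [ne_eq, OfNat.ofNat_ne_zero, not_false_eq_true, zero_pow, zero_div, Real.exp_zero,
      mul_one]
    rw [Real.sqrt_div (by positivity) _, div_eq_mul_inv, ← mul_assoc,
      inv_mul_cancel₀ (by positivity), one_mul]
  · simp_rw [hkey]
    exact (integrable_exp_quad _ 0 hp).const_mul _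

section Main
variable {Ω : Type} [mΩ : MeasurableSpace Ω] {μ : Measure Ω}

lemma row_mgf [IsProbabilityMeasure μ] {m d : ℕ} (hm : 0 < m)
    {Q : Ω → Fin m → Fin d → ℝ}
    (hQm : ∀ i k, Measurable (fun ω => Q ω i k))
    (hindep : iIndepFun
      (fun ik : Fin m × Fin d => fun ω => Q ω ik.1 ik.2) μ)
    (hgauss : ∀ i k, Measure.map (fun ω => Q ω i k) μ = gaussianReal 0 (m : NNReal)⁻¹)
    (c : Fin d → ℝ) (ht : 0 < ∑ k, c k ^ 2) (i : Fin m) :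
    ∫⁻ ω, ENNReal.ofReal (Real.exp (((m : ℝ)/(8 * ∑ k, c k ^ 2))
        * (∑ k, Q ω i k * c k) ^ 2)) ∂μ = ENNReal.ofReal ((Real.sqrt (3/4))⁻¹) := by
  set t : ℝ := ∑ k, c k ^ 2 with htdef
  have hmpos : (0 : ℝ) < m := by exact_mod_cast hm
  set s : ℝ := (m : ℝ)/(8 * t) with hsdef
  have hspos : 0 < s := by positivity
  set a : ℝ≥0 := Real.toNNReal (2 * s) with hadef
  have hacoe : (a : ℝ) = 2 * s := Real.coe_toNNReal _ (by positivity)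
  have hane : a ≠ 0 := by
    intro h
    rw [h] at hacoe
    norm_num at hacoe
    linarith
  -- G i ω rewritten via the linearization identity
  have step1 : ∀ ω, ENNReal.ofReal (Real.exp (s * (∑ k, Q ω i k * c k) ^ 2))
      = ∫⁻ y, ENNReal.ofReal (Real.exp ((∑ k, Q ω i k * c k) * y)) ∂(gaussianReal 0 a) := by
    intro ω
    rw [lintegral_exp_mul_gauss a (∑ k, Q ω i k * c k), hacoe]
    ring_nf
  -- swap
  have hGm : Measurable (fun ω => ∑ k, Q ω i k * c k) := by
    apply Finset.measurable_sum
    intro k _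
    exact (hQm i k).mul_const _
  have step2 : ∫⁻ ω, ∫⁻ y, ENNReal.ofReal (Real.exp ((∑ k, Q ω i k * c k) * y))
        ∂(gaussianReal 0 a) ∂μ
      = ∫⁻ y, ∫⁻ ω, ENNReal.ofReal (Real.exp ((∑ k, Q ω i k * c k) * y)) ∂μ
        ∂(gaussianReal 0 a) := by
    rw [lintegral_lintegral_swap]
    apply Measurable.aemeasurable
    apply Measurable.ennreal_ofReal
    apply Real.measurable_exp.comp
    exact (hGm.comp measurable_fst).mul measurable_snd
  -- inner integral for fixed y
  have inner : ∀ y : ℝ, ∫⁻ ω, ENNReal.ofReal (Real.exp ((∑ k, Q ω i k * c k) * y)) ∂μ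
      = ENNReal.ofReal (Real.exp ((t / (2 * m)) * y ^ 2)) := by
    intro y
    have expand : ∀ ω, ENNReal.ofReal (Real.exp ((∑ k, Q ω i k * c k) * y))
        = ∏ k, ENNReal.ofReal (Real.exp ((y * c k) * Q ω i k)) := by
      intro ω
      rw [← ENNReal.ofReal_prod_of_nonneg (fun k _ => (Real.exp_pos _).le), ← Real.exp_sum,
        Finset.sum_mul]
      congr 2
      exact Finset.sum_congr rfl (fun k _ => by ring)
    simp_rw [expand]
    rw [lintegral_prod_groups hindep (fun ik => hQm ik.1 ik.2)
      (fun k : Fin d => {(i, k)}) (fun k k' hkk' => by simpa using hkk')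
      (fun k v => ENNReal.ofReal (Real.exp ((y * c k) * v (i, k))))
      (fun k => by fun_prop)
      (fun k v w h => by rw [h (i, k) (Finset.mem_singleton_self _)]) Finset.univ]
    have each : ∀ k : Fin d, ∫⁻ ω, ENNReal.ofReal (Real.exp ((y * c k) * Q ω i k)) ∂μ
        = ENNReal.ofReal (Real.exp ((((m : NNReal)⁻¹ : ℝ≥0) : ℝ) * (y * c k) ^ 2 / 2)) := by
      intro k
      rw [← lintegral_exp_mul_gauss ((m : NNReal)⁻¹) (y * c k), ← hgauss i k,
        lintegral_map (by fun_prop) (hQm i k)]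
    simp_rw [each]
    rw [← ENNReal.ofReal_prod_of_nonneg (fun k _ => (Real.exp_pos _).le), ← Real.exp_sum]
    congr 1
    rw [htdef, Finset.sum_div, Finset.sum_mul]
    congr 1
    apply Finset.sum_congr rfl
    intro k _
    push_cast
    field_simp
  -- outer integral
  calc ∫⁻ ω, ENNReal.ofReal (Real.exp (s * (∑ k, Q ω i k * c k) ^ 2)) ∂μ
      = ∫⁻ y, ENNReal.ofReal (Real.exp ((t / (2 * m)) * y ^ 2)) ∂(gaussianReal 0 a) := by
        simp_rw [step1]
        rw [step2]
        exact lintegral_congr_ae (Filter.Eventually.of_forall (fun y => inner y))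
    _ = ENNReal.ofReal ((Real.sqrt (1 - 2 * (t / (2 * m)) * (a : ℝ)))⁻¹) := by
        apply lintegral_exp_sq_gauss
        · rw [hacoe, hsdef]
          rw [show 2 * (t / (2 * ↑m)) * (2 * ((m:ℝ) / (8 * t))) = 1/4 by field_simp; ring]
          norm_num
        · exact hane
    _ = ENNReal.ofReal ((Real.sqrt (3/4))⁻¹) := by
        congr 3
        rw [hacoe, hsdef]
        field_simp
        ring

lemma column_chernoff [IsProbabilityMeasure μ] {m d : ℕ} (hm : 0 < m)
    {Q : Ω → Fin m → Fin d → ℝ}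
    (hQm : ∀ i k, Measurable (fun ω => Q ω i k))
    (hindep : iIndepFun
      (fun ik : Fin m × Fin d => fun ω => Q ω ik.1 ik.2) μ)
    (hgauss : ∀ i k, Measure.map (fun ω => Q ω i k) μ = gaussianReal 0 (m : NNReal)⁻¹)
    (c : Fin d → ℝ) :
    μ {ω | 9/4 * (∑ k, c k ^ 2) < ∑ i, (∑ k, Q ω i k * c k) ^ 2}
      ≤ ENNReal.ofReal (Real.exp (-(m : ℝ)/64)) := by
  have htnn : 0 ≤ ∑ k, c k ^ 2 := Finset.sum_nonneg (fun k _ => sq_nonneg _)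
  rcases eq_or_lt_of_le htnn with h0 | ht
  · have hc0 : ∀ k, c k = 0 := by
      intro k
      have := (Finset.sum_eq_zero_iff_of_nonneg (fun k (_ : k ∈ Finset.univ) => sq_nonneg (c k))).mp
        h0.symm k (Finset.mem_univ k)
      exact pow_eq_zero_iff (n := 2) (by norm_num) |>.mp this
    have : {ω | 9/4 * (∑ k, c k ^ 2) < ∑ i, (∑ k, Q ω i k * c k) ^ 2} = ∅ := by
      ext ω
      simp [hc0]
    rw [this]
    simp
  set t : ℝ := ∑ k, c k ^ 2 with htdef
  have hmpos : (0 : ℝ) < m := by exact_mod_cast hm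
  set s : ℝ := (m : ℝ)/(8 * t) with hsdef
  have hspos : 0 < s := by positivity
  set V : ℝ := (Real.sqrt (3/4))⁻¹ with hVdef
  have hVpos : 0 < V := by positivity
  set G : Ω → ℝ := fun ω => ∑ i, (∑ k, Q ω i k * c k) ^ 2 with hGdef
  have hGm : Measurable G := by
    apply Finset.measurable_sum
    intro i _
    exact (Finset.measurable_sum _ (fun k _ => (hQm i k).mul_const _)).pow_const _
  -- the mgf of the column sum
  have hL : ∫⁻ ω, ENNReal.ofReal (Real.exp (s * G ω)) ∂μ = ENNReal.ofReal (V ^ m) := by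
    have expand : ∀ ω, ENNReal.ofReal (Real.exp (s * G ω))
        = ∏ i, ENNReal.ofReal (Real.exp (s * (∑ k, Q ω i k * c k) ^ 2)) := by
      intro ω
      rw [← ENNReal.ofReal_prod_of_nonneg (fun i _ => (Real.exp_pos _).le), ← Real.exp_sum,
        hGdef, Finset.mul_sum]
    simp_rw [expand]
    rw [lintegral_prod_groups hindep (fun ik => hQm ik.1 ik.2)
      (fun i : Fin m => {i} ×ˢ Finset.univ)
      (fun i i' hii' => by
        simp only [Finset.disjoint_left, Finset.mem_product, Finset.mem_singleton]
        rintro ⟨x, y⟩ ⟨rfl, -⟩ ⟨h, -⟩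
        exact hii' h)
      (fun i v => ENNReal.ofReal (Real.exp (s * (∑ k, v (i, k) * c k) ^ 2)))
      (fun i => by fun_prop)
      (fun i v w h => by
        have hsum : (∑ k, v (i, k) * c k) = ∑ k, w (i, k) * c k :=
          Finset.sum_congr rfl (fun k _ => by rw [h (i, k) (by simp)])
        rw [hsum]) Finset.univ]
    have each : ∀ i, ∫⁻ ω, ENNReal.ofReal (Real.exp (s * (∑ k, Q ω i k * c k) ^ 2)) ∂μ
        = ENNReal.ofReal V := row_mgf hm hQm hindep hgauss c ht
    simp_rw [each]
    rw [Finset.prod_const, ← ENNReal.ofReal_pow hVpos.le]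
    simp
  -- Markov
  set ε : ℝ≥0∞ := ENNReal.ofReal (Real.exp (s * (9/4 * t))) with hεdef
  have hε0 : ε ≠ 0 := by
    simp [hεdef, Real.exp_pos]
  have hεtop : ε ≠ ⊤ := ENNReal.ofReal_ne_top
  have hsub : {ω | 9/4 * t < G ω} ⊆ {ω | ε ≤ ENNReal.ofReal (Real.exp (s * G ω))} := by
    intro ω hω
    simp only [Set.mem_setOf_eq] at hω ⊢
    apply ENNReal.ofReal_le_ofReal
    apply Real.exp_le_exp.mpr
    nlinarith
  have hmarkov := mul_meas_ge_le_lintegral₀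
    (μ := μ) (f := fun ω => ENNReal.ofReal (Real.exp (s * G ω)))
    (((Real.measurable_exp.comp (hGm.const_mul s)).ennreal_ofReal).aemeasurable) ε
  have hmE : μ {ω | 9/4 * t < G ω} ≤ ENNReal.ofReal (V ^ m) / ε := by
    rw [ENNReal.le_div_iff_mul_le (Or.inl hε0) (Or.inl hεtop), mul_comm, ← hL]
    exact le_trans (mul_le_mul_right (measure_mono hsub) ε) hmarkov
  refine le_trans hmE ?_
  -- numeric bound
  have hst : s * (9/4 * t) = 9 * (m : ℝ) / 32 := by
    rw [hsdef]
    field_simp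
    ring
  rw [hεdef, hst, ← ENNReal.ofReal_div_of_pos (Real.exp_pos _)]
  apply ENNReal.ofReal_le_ofReal
  have hVle : V ≤ Real.exp (17/64) := by
    rw [hVdef, ← Real.sqrt_inv]
    have h43 : (4:ℝ)/3 ≤ Real.exp (17/32) := by
      have hlog : Real.log ((4:ℝ)/3) ≤ 1/3 := by
        have := Real.log_le_sub_one_of_pos (x := (4:ℝ)/3) (by norm_num)
        linarith
      calc (4:ℝ)/3 = Real.exp (Real.log ((4:ℝ)/3)) := (Real.exp_log (by norm_num)).symm
        _ ≤ Real.exp (17/32) := Real.exp_le_exp.mpr (by linarith)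
    calc Real.sqrt ((3/4:ℝ))⁻¹ = Real.sqrt (4/3) := by norm_num
      _ ≤ Real.sqrt (Real.exp (17/32)) := Real.sqrt_le_sqrt h43
      _ = Real.exp (17/64) := by
          rw [← Real.exp_half]
          norm_num
  calc V ^ m / Real.exp (9 * (m:ℝ) / 32) ≤ Real.exp (17/64) ^ m / Real.exp (9 * (m:ℝ) / 32) := by
        gcongr

      _ = Real.exp (-(m:ℝ)/64) := by
        rw [← Real.exp_nat_mul, ← Real.exp_sub]
        congr 1
        ring



lemma iIndepFun_ae_eq {ι Ω : Type*} [mΩ : MeasurableSpace Ω] {μ : Measure Ω}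
    {β : ι → Type*} [m : ∀ i, MeasurableSpace (β i)] {f g : ∀ i, Ω → β i}
    (hf : iIndepFun f μ) (h : ∀ i, f i =ᵐ[μ] g i) : iIndepFun g μ := by
  rw [iIndepFun_iff_measure_inter_preimage_eq_mul] at hf ⊢
  intro S sets H
  have hall : ∀ᵐ ω ∂μ, ∀ i ∈ S, f i ω = g i ω :=
    (ae_ball_iff S.countable_toSet).mpr (fun i _ => h i)
  have h1 : μ (⋂ i ∈ S, g i ⁻¹' sets i) = μ (⋂ i ∈ S, f i ⁻¹' sets i) := by
    apply measure_congr
    apply Filter.eventuallyEq_set.mpr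
    refine hall.mono (fun ω hω => ?_)
    simp only [Set.mem_iInter, Set.mem_preimage]
    constructor
    · intro hmem i hi
      rw [hω i hi]
      exact hmem i hi
    · intro hmem i hi
      rw [← hω i hi]
      exact hmem i hi
  have h2 : ∀ i ∈ S, μ (g i ⁻¹' sets i) = μ (f i ⁻¹' sets i) := by
    intro i hi
    apply measure_congr
    apply Filter.eventuallyEq_set.mpr
    refine (h i).mono (fun ω hω => ?_)
    simp only [Set.mem_preimage, hω]
  rw [h1, hf S H]
  exact (Finset.prod_congr rfl h2).symm

/-- The Frobenius norm of a real matrix. -/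
noncomputable def frobNorm {a b : Type} [Fintype a] [Fintype b]
    (X : Matrix a b ℝ) : ℝ :=
  Real.sqrt (∑ i : a, ∑ j : b, (X i j) ^ 2)

/-- Let `n ≥ 2`, `0 < δ < 1`, `m ≥ 64·ln(2n/δ)`, and let `M, M'` be real
`d×c` matrices with `c ≤ n/4` columns. If `P` is a random `m×d` matrix with i.i.d. Gaussian
entries of mean 0 and variance `1/m`, then with probability at least `1 − δ/4`,
`‖P·M − P·M'‖_F ≤ (3/2)·‖M − M'‖_F`. -/
theorem jl_frobenius_sensitivity (n : ℕ) (hn : 2 ≤ n) (δ : ℝ) (hδ0 : 0 < δ) (hδ1 : δ < 1)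
    (m d c : ℕ) (hm : 64 * Real.log (2 * (n : ℝ) / δ) ≤ (m : ℝ)) (hc : (c : ℝ) ≤ (n : ℝ) / 4)
    (M M' : Matrix (Fin d) (Fin c) ℝ)
    (Ω : Type) (mΩ : MeasurableSpace Ω) (μ : Measure Ω) (hμ : IsProbabilityMeasure μ)
    (P : Ω → Matrix (Fin m) (Fin d) ℝ)
    (hindep : iIndepFun
      (fun ij : Fin m × Fin d => fun ω => P ω ij.1 ij.2) μ)
    (hgauss : ∀ i j, Measure.map (fun ω => P ω i j) μ = gaussianReal 0 (m : NNReal)⁻¹) :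
    ENNReal.ofReal (1 - δ / 4) ≤
      μ {ω | frobNorm (P ω * M - P ω * M') ≤ 3 / 2 * frobNorm (M - M')} := by
  haveI := hμ
  have hnpos : (0:ℝ) < n := by
    have : (2:ℝ) ≤ n := by exact_mod_cast hn
    linarith
  have h2n : (2:ℝ) ≤ n := by exact_mod_cast hn
  have hratio : (4:ℝ) ≤ 2 * n / δ := by
    rw [le_div_iff₀ hδ0]
    nlinarith
  have hlogpos : 0 < Real.log (2 * (n:ℝ) / δ) := Real.log_pos (by linarith)
  have hmpos : 0 < m := by
    by_contra h
    push_neg at h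
    have hm0 : (m : ℝ) = 0 := by
      have : m = 0 := Nat.le_zero.mp h
      simp [this]
    rw [hm0] at hm
    nlinarith
  -- measurable modification of P
  have hPae : ∀ i k, AEMeasurable (fun ω => P ω i k) μ := by
    intro i k
    by_contra h
    have h0 := Measure.map_of_not_aemeasurable h
    rw [hgauss i k] at h0
    exact (IsProbabilityMeasure.ne_zero (gaussianReal 0 (m : NNReal)⁻¹)) h0
  set Q : Ω → Fin m → Fin d → ℝ := fun ω i k => AEMeasurable.mk _ (hPae i k) ω with hQdef
  have hQm : ∀ i k, Measurable (fun ω => Q ω i k) := fun i k => (hPae i k).measurable_mk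
  have hQae : ∀ i k, (fun ω => P ω i k) =ᵐ[μ] (fun ω => Q ω i k) :=
    fun i k => (hPae i k).ae_eq_mk
  have hgaussQ : ∀ i k, Measure.map (fun ω => Q ω i k) μ = gaussianReal 0 (m : NNReal)⁻¹ := by
    intro i k
    rw [← Measure.map_congr (hQae i k)]
    exact hgauss i k
  have hindepQ : iIndepFun
      (fun ik : Fin m × Fin d => fun ω => Q ω ik.1 ik.2) μ :=
    iIndepFun_ae_eq hindep (fun ik => hQae ik.1 ik.2)
  -- transfer the event to Q
  have hall : ∀ᵐ ω ∂μ, ∀ i k, P ω i k = Q ω i k := by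
    rw [ae_all_iff]
    intro i
    rw [ae_all_iff]
    exact fun k => hQae i k
  have hseteq : {ω | frobNorm (P ω * M - P ω * M') ≤ 3 / 2 * frobNorm (M - M')}
      =ᵐ[μ] {ω | frobNorm ((Matrix.of (Q ω)) * M - (Matrix.of (Q ω)) * M')
        ≤ 3 / 2 * frobNorm (M - M')} := by
    apply Filter.eventuallyEq_set.mpr
    refine hall.mono (fun ω hω => ?_)
    have hPQ : P ω = Matrix.of (Q ω) := by
      ext i k
      exact hω i k
    simp only [Set.mem_setOf_eq, hPQ]
  rw [measure_congr hseteq]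
  set X : Matrix (Fin d) (Fin c) ℝ := M - M' with hXdef
  have hmulsub : ∀ ω, (Matrix.of (Q ω)) * M - (Matrix.of (Q ω)) * M'
      = (Matrix.of (Q ω)) * X := fun ω => (Matrix.mul_sub _ _ _).symm
  -- good event from column bounds
  have hgood : ∀ ω, (∀ j : Fin c, ∑ i, (∑ k, Q ω i k * X k j) ^ 2
        ≤ 9/4 * (∑ k, X k j ^ 2)) →
      frobNorm ((Matrix.of (Q ω)) * X) ≤ 3 / 2 * frobNorm X := by
    intro ω hω
    unfold frobNorm
    have hsum : ∑ i, ∑ j, ((Matrix.of (Q ω) * X) i j) ^ 2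
        ≤ 9/4 * ∑ i, ∑ j, (X i j) ^ 2 := by
      have hL : ∑ i, ∑ j, ((Matrix.of (Q ω) * X) i j) ^ 2
          = ∑ j : Fin c, ∑ i : Fin m, (∑ k, Q ω i k * X k j) ^ 2 := by
        rw [Finset.sum_comm]
        apply Finset.sum_congr rfl
        intro j _
        apply Finset.sum_congr rfl
        intro i _
        simp [Matrix.mul_apply]
      have hR : ∑ i, ∑ j, (X i j) ^ 2 = ∑ j : Fin c, ∑ i : Fin d, (X i j) ^ 2 :=
        Finset.sum_comm
      rw [hL, hR, Finset.mul_sum]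
      exact Finset.sum_le_sum (fun j _ => hω j)
    calc Real.sqrt (∑ i, ∑ j, ((Matrix.of (Q ω) * X) i j) ^ 2)
        ≤ Real.sqrt (9/4 * ∑ i, ∑ j, (X i j) ^ 2) := Real.sqrt_le_sqrt hsum
      _ = 3 / 2 * Real.sqrt (∑ i, ∑ j, (X i j) ^ 2) := by
          rw [show (9/4:ℝ) = (3/2)^2 by norm_num, Real.sqrt_mul (sq_nonneg _),
            Real.sqrt_sq (by norm_num : (0:ℝ) ≤ 3/2)]
  -- union bound
  set Bad : Set Ω := ⋃ j : Fin c,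
    {ω | 9/4 * (∑ k, X k j ^ 2) < ∑ i, (∑ k, Q ω i k * X k j) ^ 2} with hBaddef
  have hcompl : {ω | frobNorm ((Matrix.of (Q ω)) * M - (Matrix.of (Q ω)) * M')
      ≤ 3 / 2 * frobNorm (M - M')}ᶜ ⊆ Bad := by
    intro ω hω
    by_contra hbad
    apply hω
    simp only [Set.mem_compl_iff, Set.mem_setOf_eq, not_not] at hω ⊢
    rw [hmulsub ω]
    show frobNorm (Matrix.of (Q ω) * X) ≤ 3 / 2 * frobNorm X
    apply hgood
    intro j
    by_contra hj
    apply hbad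
    rw [hBaddef]
    apply Set.mem_iUnion.mpr
    exact ⟨j, by simpa using lt_of_not_ge hj⟩
  have hexp : Real.exp (-(m:ℝ)/64) ≤ δ/(2*n) := by
    have h1 : Real.exp (-(m:ℝ)/64) ≤ Real.exp (-Real.log (2 * (n:ℝ) / δ)) := by
      apply Real.exp_le_exp.mpr
      linarith
    rw [Real.exp_neg, Real.exp_log (by positivity), inv_div] at h1
    exact h1
  have hBad : μ Bad ≤ ENNReal.ofReal (δ/4) := by
    rw [hBaddef]
    refine le_trans (measure_iUnion_fintype_le _ _) ?_
    have heach : ∀ j : Fin c,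
        μ {ω | 9/4 * (∑ k, X k j ^ 2) < ∑ i, (∑ k, Q ω i k * X k j) ^ 2}
          ≤ ENNReal.ofReal (Real.exp (-(m:ℝ)/64)) :=
      fun j => column_chernoff hmpos hQm hindepQ hgaussQ (fun k => X k j)
    calc ∑ j : Fin c, μ {ω | 9/4 * (∑ k, X k j ^ 2) < ∑ i, (∑ k, Q ω i k * X k j) ^ 2}
        ≤ ∑ _j : Fin c, ENNReal.ofReal (Real.exp (-(m:ℝ)/64)) :=
          Finset.sum_le_sum (fun j _ => heach j)
      _ = (c : ℝ≥0∞) * ENNReal.ofReal (Real.exp (-(m:ℝ)/64)) := by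
          rw [Finset.sum_const, Finset.card_univ, Fintype.card_fin, nsmul_eq_mul]
      _ ≤ (c : ℝ≥0∞) * ENNReal.ofReal (δ/(2*n)) := by
          exact mul_le_mul_right (ENNReal.ofReal_le_ofReal hexp) _
      _ = ENNReal.ofReal ((c:ℝ) * (δ/(2*n))) := by
          rw [ENNReal.ofReal_mul (by positivity), ENNReal.ofReal_natCast]
      _ ≤ ENNReal.ofReal (δ/4) := by
          apply ENNReal.ofReal_le_ofReal
          rw [mul_div_assoc']
          rw [div_le_div_iff₀ (by positivity) (by norm_num)]
          nlinarith [mul_le_mul_of_nonneg_right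
            (show 4*(c:ℝ) ≤ n by linarith) hδ0.le, mul_nonneg hnpos.le hδ0.le]
  -- conclude
  set E := {ω | frobNorm ((Matrix.of (Q ω)) * M - (Matrix.of (Q ω)) * M')
      ≤ 3 / 2 * frobNorm (M - M')} with hEdef
  have h1 : (1:ℝ≥0∞) ≤ μ E + μ Eᶜ := by
    rw [← measure_univ (μ := μ), ← Set.union_compl_self E]
    exact measure_union_le _ _
  have h2 : μ Eᶜ ≤ ENNReal.ofReal (δ/4) := le_trans (measure_mono hcompl) hBad
  have h3 : ENNReal.ofReal (1 - δ / 4) + ENNReal.ofReal (δ/4) ≤ μ E + ENNReal.ofReal (δ/4) := by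
    rw [← ENNReal.ofReal_add (by linarith) (by linarith)]
    norm_num
    calc (1:ℝ≥0∞) ≤ μ E + μ Eᶜ := h1
      _ ≤ μ E + ENNReal.ofReal (δ/4) := add_le_add_right h2 _
  exact (ENNReal.add_le_add_iff_right ENNReal.ofReal_ne_top).mp h3
end Main
end

section
/- Let A be a randomized algorithm mapping each weighted graph on V (|V| = n) to a probability distribution over binary trees with leaf set V, satisfying ε-edge differential privacy. Let d be a positive integer and let G₁,…,G_N be weighted graphs on V such that Σ over unordered pairs {u,v} of |w_i(u,v) − w_j(u,v)| ≤ d for all i, j. Let S₁,…,S_N be pairwise disjoint sets of binary trees with leaf set V such that Pr[A(G_i) ∈ S_i] ≥ p > 0 for every i. Then N ≤ e^{d·ε}/p. -/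
open Finset

namespace BTree

variable {V : Type} [DecidableEq V]

def cluster : BTree V → V → V → Finset V
  | leaf x, _, _ => {x}
  | node L R, u, v =>
    if u ∈ L.leaves ∧ v ∈ L.leaves then L.cluster u v
    else if u ∈ R.leaves ∧ v ∈ R.leaves then R.cluster u v
    else (node L R).leaves

end BTree

section
variable {V : Type} [Fintype V] [DecidableEq V]

def IsHC (T : BTree V) : Prop :=
  T.leavesList.Nodup ∧ T.leaves = Finset.univ

def IsWeight (w : V → V → ℝ) : Prop :=
  (∀ u v, 0 ≤ w u v) ∧ (∀ u v, w u v = w v u) ∧ ∀ u, w u u = 0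

noncomputable def cost (w : V → V → ℝ) (T : BTree V) : ℝ :=
  (1 / 2) * ∑ u : V, ∑ v : V, w u v * ((T.cluster u v).card : ℝ)

noncomputable def optCost (w : V → V → ℝ) : ℝ :=
  sInf {c : ℝ | ∃ T : BTree V, IsHC T ∧ cost w T = c}

noncomputable def graphDist (w w' : V → V → ℝ) : ℝ :=
  (1 / 2) * ∑ u : V, ∑ v : V, |w u v - w' u v|

noncomputable def cutW (w : V → V → ℝ) (A B : Finset V) : ℝ :=
  ∑ a ∈ A, ∑ b ∈ B, w a b

def IsEdgeDP (A : (V → V → ℝ) → PMF (BTree V)) (ε : ℝ) : Prop :=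
  ∀ w w' : V → V → ℝ, IsWeight w → IsWeight w' → graphDist w w' ≤ 1 →
    ∀ S : Set (BTree V),
      (A w').toOuterMeasure S ≤ ENNReal.ofReal (Real.exp ε) * (A w).toOuterMeasure S

end

section auxlemmas

variable {V : Type} [Fintype V] [DecidableEq V]

lemma graphDist_mix (w w' : V → V → ℝ) (s t : ℝ) :
    graphDist (fun u v => (1 - s) * w u v + s * w' u v)
      (fun u v => (1 - t) * w u v + t * w' u v) = |t - s| * graphDist w w' := by
  unfold graphDist
  have h : ∀ u v : V,
      |((1 - s) * w u v + s * w' u v) - ((1 - t) * w u v + t * w' u v)|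
        = |t - s| * |w u v - w' u v| := by
    intro u v
    rw [← abs_mul]
    congr 1
    ring
  simp_rw [h, ← Finset.mul_sum]
  ring

lemma isWeight_mix (w w' : V → V → ℝ) (hw : IsWeight w) (hw' : IsWeight w')
    (t : ℝ) (h0 : 0 ≤ t) (h1 : t ≤ 1) :
    IsWeight (fun u v => (1 - t) * w u v + t * w' u v) := by
  refine ⟨fun u v => add_nonneg (mul_nonneg (by linarith) (hw.1 u v))
      (mul_nonneg h0 (hw'.1 u v)),
    fun u v => by
      show (1 - t) * w u v + t * w' u v = (1 - t) * w v u + t * w' v u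
      rw [hw.2.1 u v, hw'.2.1 u v],
    fun u => by
      show (1 - t) * w u u + t * w' u u = 0
      rw [hw.2.2 u, hw'.2.2 u]; ring⟩

lemma group_dp {A : (V → V → ℝ) → PMF (BTree V)} {ε : ℝ} (hDP : IsEdgeDP A ε)
    (d : ℕ) (hd : 1 ≤ d) (w w' : V → V → ℝ) (hw : IsWeight w) (hw' : IsWeight w')
    (hdist : graphDist w w' ≤ (d : ℝ)) (S : Set (BTree V)) :
    (A w').toOuterMeasure S ≤
      ENNReal.ofReal (Real.exp ((d : ℝ) * ε)) * (A w).toOuterMeasure S := by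
  have hm : (0 : ℝ) < (d : ℝ) := by exact_mod_cast hd
  set f : ℕ → (V → V → ℝ) :=
    fun k => fun u v => (1 - (k : ℝ) / d) * w u v + ((k : ℝ) / d) * w' u v with hf
  have key : ∀ k, k ≤ d → (A (f k)).toOuterMeasure S ≤
      ENNReal.ofReal (Real.exp ((k : ℝ) * ε)) * (A w).toOuterMeasure S := by
    intro k
    induction k with
    | zero =>
      intro _
      have hf0 : f 0 = w := by funext u v; simp [hf]
      rw [hf0]
      simp
    | succ k ih =>
      intro hk
      have hk' : k ≤ d := Nat.le_of_succ_le hk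
      have hkd : (k : ℝ) / d ≤ 1 := by
        rw [div_le_one hm]
        exact_mod_cast hk'
      have hkd1 : ((k : ℝ) + 1) / d ≤ 1 := by
        rw [div_le_one hm]
        exact_mod_cast hk
      have step : (A (f (k + 1))).toOuterMeasure S ≤
          ENNReal.ofReal (Real.exp ε) * (A (f k)).toOuterMeasure S := by
        apply hDP
        · exact isWeight_mix w w' hw hw' _ (by positivity) hkd
        · refine isWeight_mix w w' hw hw' _ (by positivity) ?_
          push_cast
          exact hkd1
        · have := graphDist_mix w w' ((k : ℝ) / d) (((k : ℕ) + 1 : ℕ) : ℝ)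
          rw [hf]
          have hgd : graphDist
              (fun u v => (1 - (k : ℝ) / d) * w u v + ((k : ℝ) / d) * w' u v)
              (fun u v => (1 - ((k : ℕ) + 1 : ℝ) / d) * w u v + (((k : ℕ) + 1 : ℝ) / d) * w' u v)
              = |((k : ℝ) + 1) / d - (k : ℝ) / d| * graphDist w w' :=
            graphDist_mix w w' _ _
          push_cast
          rw [hgd]
          have habs : |((k : ℝ) + 1) / d - (k : ℝ) / d| = 1 / d := by
            rw [abs_of_nonneg]
            · ring
            · have : ((k : ℝ) + 1) / d - (k : ℝ) / d = 1 / d := by ring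
              rw [this]; positivity
          rw [habs]
          calc (1 / (d : ℝ)) * graphDist w w' ≤ (1 / d) * d := by
                apply mul_le_mul_of_nonneg_left hdist
                positivity
            _ = 1 := by field_simp
      calc (A (f (k + 1))).toOuterMeasure S
          ≤ ENNReal.ofReal (Real.exp ε) * (A (f k)).toOuterMeasure S := step
        _ ≤ ENNReal.ofReal (Real.exp ε) *
            (ENNReal.ofReal (Real.exp ((k : ℝ) * ε)) * (A w).toOuterMeasure S) :=
            mul_le_mul_right (ih hk') _
        _ = ENNReal.ofReal (Real.exp (((k + 1 : ℕ) : ℝ) * ε)) * (A w).toOuterMeasure S := by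
            rw [← mul_assoc, ← ENNReal.ofReal_mul (Real.exp_nonneg _), ← Real.exp_add]
            congr 2
            push_cast
            ring
  have hfd : f d = w' := by
    funext u v
    simp only [hf]
    rw [div_self (ne_of_gt hm)]
    ring
  have := key d le_rfl
  rwa [hfd] at this

lemma sum_disjoint_le_one (q : PMF (BTree V)) (N : ℕ) (S : Fin N → Set (BTree V))
    (hdisj : ∀ i j : Fin N, i ≠ j → Disjoint (S i) (S j)) :
    ∑ i : Fin N, q.toOuterMeasure (S i) ≤ 1 := by
  simp_rw [PMF.toOuterMeasure_apply]
  rw [← Summable.tsum_finsetSum (fun i _ => ENNReal.summable)]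
  calc ∑' x, ∑ i : Fin N, (S i).indicator q x
      ≤ ∑' x, q x := by
        apply ENNReal.tsum_le_tsum
        intro x
        by_cases h : ∃ i, x ∈ S i
        · obtain ⟨i, hi⟩ := h
          rw [Finset.sum_eq_single_of_mem i (Finset.mem_univ i)]
          · rw [Set.indicator_of_mem hi]
          · intro j _ hji
            apply Set.indicator_of_notMem
            exact fun hxj => Set.disjoint_left.mp (hdisj j i hji) hxj hi
        · push_neg at h
          rw [Finset.sum_eq_zero]
          · exact zero_le
          · intro j _
            exact Set.indicator_of_notMem (h j) q
    _ = 1 := q.tsum_coe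

end auxlemmas

/-- Packing bound for `ε`-edge-DP hierarchical clustering: if weighted
graphs `G₁,…,G_N` are pairwise within `L₁`-distance `d` of each other, the tree sets
`S₁,…,S_N` are pairwise disjoint, and `Pr[A(G_i) ∈ S_i] ≥ p > 0` for all `i`, then
`N ≤ e^{d·ε}/p`. -/
theorem dp_packing_bound (V : Type) [Fintype V] [DecidableEq V] (ε : ℝ)
    (A : (V → V → ℝ) → PMF (BTree V))
    (hsupp : ∀ w : V → V → ℝ, IsWeight w → ∀ T ∈ (A w).support, IsHC T)
    (hDP : IsEdgeDP A ε)
    (N : ℕ) (d : ℕ) (hd : 1 ≤ d)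
    (G : Fin N → V → V → ℝ) (hG : ∀ i, IsWeight (G i))
    (hdist : ∀ i j : Fin N, graphDist (G i) (G j) ≤ (d : ℝ))
    (S : Fin N → Set (BTree V)) (hdisj : ∀ i j : Fin N, i ≠ j → Disjoint (S i) (S j))
    (p : ℝ) (hp : 0 < p)
    (hmass : ∀ i : Fin N, ENNReal.ofReal p ≤ (A (G i)).toOuterMeasure (S i)) :
    (N : ℝ) ≤ Real.exp ((d : ℝ) * ε) / p := by
  rcases Nat.eq_zero_or_pos N with h0 | hN
  · subst h0
    simp only [Nat.cast_zero]
    positivity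
  set i0 : Fin N := ⟨0, hN⟩
  have hbound : ∀ i : Fin N, ENNReal.ofReal p ≤
      ENNReal.ofReal (Real.exp ((d : ℝ) * ε)) * (A (G i0)).toOuterMeasure (S i) :=
    fun i => (hmass i).trans
      (group_dp hDP d hd (G i0) (G i) (hG i0) (hG i) (hdist i0 i) (S i))
  have hsum : (N : ENNReal) * ENNReal.ofReal p ≤ ENNReal.ofReal (Real.exp ((d : ℝ) * ε)) := by
    calc (N : ENNReal) * ENNReal.ofReal p = ∑ _i : Fin N, ENNReal.ofReal p := by
          simp [Finset.sum_const, mul_comm]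
      _ ≤ ∑ i : Fin N, ENNReal.ofReal (Real.exp ((d : ℝ) * ε)) *
            (A (G i0)).toOuterMeasure (S i) := Finset.sum_le_sum fun i _ => hbound i
      _ = ENNReal.ofReal (Real.exp ((d : ℝ) * ε)) *
            ∑ i : Fin N, (A (G i0)).toOuterMeasure (S i) := by rw [Finset.mul_sum]
      _ ≤ ENNReal.ofReal (Real.exp ((d : ℝ) * ε)) * 1 :=
            mul_le_mul_right (sum_disjoint_le_one (A (G i0)) N S hdisj) _
      _ = _ := mul_one _
  have hEN : ENNReal.ofReal ((N : ℝ) * p) ≤ ENNReal.ofReal (Real.exp ((d : ℝ) * ε)) := by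
    rw [ENNReal.ofReal_mul (Nat.cast_nonneg N), ENNReal.ofReal_natCast]
    exact hsum
  have hreal : (N : ℝ) * p ≤ Real.exp ((d : ℝ) * ε) :=
    (ENNReal.ofReal_le_ofReal_iff (Real.exp_nonneg _)).mp hEN
  rw [le_div_iff₀ hp]
  exact hreal
end
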